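/- For every m ≥ 1 there exists a 1-perfect bitrade (T_0, T_1) in the Hamming graph H(3m+1, 3) of size |T_0| + |T_1| = 2^{m+1} · 3^{m}. -/

import Mathlib

/-- `(T0, T1)` is a 1-perfect bitrade in the graph `G`: `T0` and `T1` are disjoint nonempty
vertex sets such that for every vertex `x`, the closed ball `B(x) = N(x) ∪ {x}` either
contains exactly one element of `T0` and exactly one element of `T1`, or contains
no element of `T0 ∪ T1`. -/
def IsPerfectBitrade {V : Type*} (G : SimpleGraph V) (T0 T1 : Set V) : Prop :=
  T0.Nonempty ∧ T1.Nonempty ∧ Disjoint T0 T1 ∧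
  ∀ x : V,
    ((∃! y, (y ∈ G.neighborSet x ∪ {x}) ∧ y ∈ T0) ∧
     (∃! y, (y ∈ G.neighborSet x ∪ {x}) ∧ y ∈ T1)) ∨
    (∀ y ∈ G.neighborSet x ∪ {x}, y ∉ T0 ∪ T1)

/-- The Hamming graph `H(n,q)`: vertices are words of length `n` over `Σ_q`,
adjacent iff they differ in exactly one coordinate. -/
def hammingGraph (n q : ℕ) : SimpleGraph (Fin n → Fin q) where
  Adj x y := hammingDist x y = 1
  symm := ⟨fun x y h => by rwa [hammingDist_comm]⟩
  loopless := ⟨fun x h => by simp [hammingDist_self] at h⟩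

namespace BT13

/-! ### Triples over `Fin 3` -/

def Dis (t : Fin 3 → Fin 3) : Prop := t 0 ≠ t 1 ∧ t 0 ≠ t 2 ∧ t 1 ≠ t 2

instance : DecidablePred Dis := fun t => by unfold Dis; infer_instance

def sg (t : Fin 3 → Fin 3) : ℕ := if (t 1).val = ((t 0).val + 1) % 3 then 0 else 1

lemma dis_update : ∀ (t : Fin 3 → Fin 3) (j a : Fin 3), Dis t → a ≠ t j →
    ¬ Dis (Function.update t j a) := by decide

lemma fix_spec : ∀ (t : Fin 3 → Fin 3), ¬ Dis t →
    (∀ j a, a ≠ t j → ¬ Dis (Function.update t j a)) ∨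
    (∃ j1 a1 j2 a2, a1 ≠ t j1 ∧ a2 ≠ t j2 ∧ Dis (Function.update t j1 a1) ∧
      Dis (Function.update t j2 a2) ∧ (j1, a1) ≠ (j2, a2) ∧
      sg (Function.update t j1 a1) + sg (Function.update t j2 a2) = 1 ∧
      ∀ j a, a ≠ t j → Dis (Function.update t j a) → (j = j1 ∧ a = a1) ∨ (j = j2 ∧ a = a2)) := by
  decide

/-! ### Coordinates -/

variable {m : ℕ}

def c (m : ℕ) (i : Fin m) (j : Fin 3) : Fin (3 * m + 1) :=
  ⟨3 * i.val + j.val + 1, by have := i.isLt; have := j.isLt; omega⟩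

lemma c_ne_zero (i : Fin m) (j : Fin 3) : c m i j ≠ 0 := by
  intro h
  have := congrArg Fin.val h
  simp [c] at this

lemma c_inj {i i' : Fin m} {j j' : Fin 3} (h : c m i j = c m i' j') : i = i' ∧ j = j' := by
  have hv := congrArg Fin.val h
  simp only [c] at hv
  have hj := j.isLt; have hj' := j'.isLt
  constructor <;> apply Fin.ext <;> omega

lemma exists_block (k : Fin (3 * m + 1)) (hk : k ≠ 0) : ∃ i j, k = c m i j := by
  have hk0 : k.val ≠ 0 := fun h => hk (Fin.ext (by simpa using h))
  have hkl := k.isLt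
  refine ⟨⟨(k.val - 1) / 3, by omega⟩, ⟨(k.val - 1) % 3, by omega⟩, Fin.ext ?_⟩
  simp only [c]
  omega

def bt (m : ℕ) (x : Fin (3 * m + 1) → Fin 3) (i : Fin m) : Fin 3 → Fin 3 :=
  fun j => x (c m i j)

lemma bt_update_zero (x : Fin (3 * m + 1) → Fin 3) (a : Fin 3) (i : Fin m) :
    bt m (Function.update x 0 a) i = bt m x i := by
  funext j
  exact Function.update_of_ne (c_ne_zero i j) a x

lemma bt_update_same (x : Fin (3 * m + 1) → Fin 3) (i : Fin m) (j : Fin 3) (a : Fin 3) :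
    bt m (Function.update x (c m i j) a) i = Function.update (bt m x i) j a := by
  funext j'
  by_cases hj : j' = j
  · subst hj; simp [bt]
  · rw [Function.update_of_ne hj]
    exact Function.update_of_ne (fun h => hj (c_inj h).2) a x

lemma bt_update_other (x : Fin (3 * m + 1) → Fin 3) (i : Fin m) (j : Fin 3) (a : Fin 3)
    {i' : Fin m} (h : i' ≠ i) :
    bt m (Function.update x (c m i j) a) i' = bt m x i' := by
  funext j'
  exact Function.update_of_ne (fun hc => h (c_inj hc).1) a x

lemma update_zero_apply_zero (x : Fin (3 * m + 1) → Fin 3) (a : Fin 3) (i : Fin m) (j : Fin 3) :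
    Function.update x (c m i j) a 0 = x 0 :=
  Function.update_of_ne (fun h => c_ne_zero i j h.symm) a x


lemma dist_one_iff {N q : ℕ} (x y : Fin N → Fin q) :
    hammingDist x y = 1 ↔ ∃ k a, a ≠ x k ∧ y = Function.update x k a := by
  constructor
  · intro h
    rw [hammingDist, Finset.card_eq_one] at h
    obtain ⟨k, hk⟩ := h
    have hmem : ∀ j : Fin N, x j ≠ y j ↔ j = k := by
      intro j
      rw [← Finset.mem_singleton, ← hk]
      simp
    refine ⟨k, y k, fun h' => ((hmem k).mpr rfl) h'.symm, ?_⟩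
    funext j
    by_cases hj : j = k
    · subst hj; simp
    · rw [Function.update_of_ne hj]
      by_contra h'
      exact hj ((hmem j).mp (fun h'' => h' h''.symm))
  · rintro ⟨k, a, ha, rfl⟩
    rw [hammingDist]
    convert Finset.card_singleton k
    ext j
    simp only [Finset.mem_filter, Finset.mem_univ, true_and, Finset.mem_singleton]
    constructor
    · intro h
      by_contra hj
      rw [Function.update_of_ne hj] at h
      exact h rfl
    · rintro rfl
      simp [Ne.symm ha]

lemma mem_ball {N q : ℕ} (x y : Fin N → Fin q) :
    (y ∈ (hammingGraph N q).neighborSet x ∪ {x}) ↔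
      y = x ∨ ∃ k a, a ≠ x k ∧ y = Function.update x k a := by
  rw [Set.mem_union, Set.mem_singleton_iff, SimpleGraph.mem_neighborSet]
  have : (hammingGraph N q).Adj x y ↔ hammingDist x y = 1 := Iff.rfl
  rw [this, dist_one_iff]
  exact or_comm

lemma self_mem_ball {N q : ℕ} (x : Fin N → Fin q) :
    x ∈ (hammingGraph N q).neighborSet x ∪ {x} := (mem_ball x x).mpr (Or.inl rfl)

lemma update_mem_ball {N q : ℕ} (x : Fin N → Fin q) (k : Fin N) (a : Fin q) (ha : a ≠ x k) :
    Function.update x k a ∈ (hammingGraph N q).neighborSet x ∪ {x} :=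
  (mem_ball x _).mpr (Or.inr ⟨k, a, ha, rfl⟩)


/-! ### The trade sets -/

def P (m : ℕ) (x : Fin (3 * m + 1) → Fin 3) : Prop :=
  (x 0).val < 2 ∧ ∀ i, Dis (bt m x i)

def par (m : ℕ) (x : Fin (3 * m + 1) → Fin 3) : ℕ :=
  ((x 0).val + ∑ i, sg (bt m x i)) % 2

def T (m : ℕ) (s : ℕ) : Set (Fin (3 * m + 1) → Fin 3) :=
  {x | P m x ∧ par m x = s}

variable {m : ℕ}

lemma sum_update (x : Fin (3 * m + 1) → Fin 3) (i0 : Fin m) (j : Fin 3) (a : Fin 3) :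
    (∑ i, sg (bt m (Function.update x (c m i0 j) a) i)) =
      sg (Function.update (bt m x i0) j a) + ∑ i ∈ Finset.univ \ {i0}, sg (bt m x i) := by
  have h1 : ∀ i : Fin m, sg (bt m (Function.update x (c m i0 j) a) i) =
      Function.update (fun i => sg (bt m x i)) i0 (sg (Function.update (bt m x i0) j a)) i := by
    intro i
    by_cases hi : i = i0
    · subst hi; rw [bt_update_same, Function.update_self]
    · rw [bt_update_other x i0 j a hi, Function.update_of_ne hi]
  simp only [h1]
  exact Finset.sum_update_of_mem (Finset.mem_univ i0) (fun i => sg (bt m x i))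
    (sg (Function.update (bt m x i0) j a))


/-- The key classification of closed balls. -/
lemma classify (m : ℕ) (x : Fin (3 * m + 1) → Fin 3) :
    (∃ ya yb, ya ∈ (hammingGraph (3 * m + 1) 3).neighborSet x ∪ {x} ∧
      yb ∈ (hammingGraph (3 * m + 1) 3).neighborSet x ∪ {x} ∧
      P m ya ∧ P m yb ∧ par m ya ≠ par m yb ∧
      ∀ y ∈ (hammingGraph (3 * m + 1) 3).neighborSet x ∪ {x}, P m y → y = ya ∨ y = yb) ∨
    (∀ y ∈ (hammingGraph (3 * m + 1) 3).neighborSet x ∪ {x}, ¬ P m y) := by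
  by_cases hall : ∀ i, Dis (bt m x i)
  · -- all blocks good
    left
    by_cases hx0 : (x 0).val < 2
    · -- x itself is in the trade support
      set b : Fin 3 := ⟨1 - (x 0).val, by omega⟩ with hb
      have hbv : b.val = 1 - (x 0).val := rfl
      have hbne : b ≠ x 0 := Fin.ne_of_val_ne (by omega)
      refine ⟨x, Function.update x 0 b, self_mem_ball x, update_mem_ball x 0 b hbne,
        ⟨hx0, hall⟩, ⟨?_, ?_⟩, ?_, ?_⟩
      · rw [Function.update_self]; omega
      · intro i; rw [bt_update_zero]; exact hall i
      · unfold par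
        simp only [bt_update_zero, Function.update_self]
        omega
      · intro y hy hPy
        rw [mem_ball] at hy
        rcases hy with rfl | ⟨k, a, ha, rfl⟩
        · exact Or.inl rfl
        · by_cases hk : k = 0
          · subst hk
            right
            have ha2 : a.val < 2 := by
              have := hPy.1; rwa [Function.update_self] at this
            have hav : a.val ≠ (x 0).val := fun h => ha (Fin.ext h)
            have hab : a = b := Fin.ext (show a.val = 1 - (x 0).val by omega)
            rw [hab]
          · obtain ⟨i, j, rfl⟩ := exists_block k hk
            exfalso
            have := hPy.2 i
            rw [bt_update_same] at this
            exact dis_update (bt m x i) j a (hall i) ha this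
    · -- x 0 = 2
      have hx2 : (x 0).val = 2 := by have := (x 0).isLt; omega
      have h0ne : (0 : Fin 3) ≠ x 0 := Fin.ne_of_val_ne (by simp [hx2])
      have h1ne : (1 : Fin 3) ≠ x 0 := Fin.ne_of_val_ne (by simp [hx2])
      refine ⟨Function.update x 0 0, Function.update x 0 1,
        update_mem_ball x 0 0 h0ne, update_mem_ball x 0 1 h1ne,
        ⟨by rw [Function.update_self]; decide, fun i => by rw [bt_update_zero]; exact hall i⟩,
        ⟨by rw [Function.update_self]; decide, fun i => by rw [bt_update_zero]; exact hall i⟩,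
        ?_, ?_⟩
      · unfold par
        simp only [bt_update_zero, Function.update_self]
        have h0 : (0 : Fin 3).val = 0 := rfl
        have h1 : (1 : Fin 3).val = 1 := rfl
        omega
      · intro y hy hPy
        rw [mem_ball] at hy
        rcases hy with rfl | ⟨k, a, ha, rfl⟩
        · exact absurd hPy.1 (by omega)
        · by_cases hk : k = 0
          · subst hk
            have ha2 : a.val < 2 := by
              have := hPy.1; rwa [Function.update_self] at this
            rcases (by omega : a.val = 0 ∨ a.val = 1) with h | h
            · exact Or.inl (by rw [show a = 0 from Fin.ext (by simp [h])])
            · exact Or.inr (by rw [show a = 1 from Fin.ext (by simp [h])])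
          · obtain ⟨i, j, rfl⟩ := exists_block k hk
            exfalso
            have := hPy.1
            rw [update_zero_apply_zero] at this
            omega
  · -- some bad block
    push_neg at hall
    obtain ⟨i0, hbad⟩ := hall
    by_cases huniq : ∀ i, ¬ Dis (bt m x i) → i = i0
    · -- exactly one bad block i0
      rcases fix_spec (bt m x i0) hbad with hnof | ⟨j1, a1, j2, a2, ha1, ha2, hd1, hd2,
        hne, hs, hu⟩
      · -- no fix: empty ball
        right
        intro y hy hPy
        rw [mem_ball] at hy
        rcases hy with rfl | ⟨k, a, ha, rfl⟩
        · exact hbad (hPy.2 i0)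
        · by_cases hk : k = 0
          · subst hk
            have := hPy.2 i0
            rw [bt_update_zero] at this
            exact hbad this
          · obtain ⟨i, j, rfl⟩ := exists_block k hk
            by_cases hi : i = i0
            · subst hi
              have := hPy.2 i
              rw [bt_update_same] at this
              exact hnof j a ha this
            · have := hPy.2 i0
              rw [bt_update_other x i j a (fun h => hi h.symm)] at this
              exact hbad this
      · by_cases hx0 : (x 0).val < 2
        · -- two fixes
          left
          have hgood : ∀ i, i ≠ i0 → Dis (bt m x i) := by
            intro i hi
            by_contra h
            exact hi (huniq i h)
          have hP1 : P m (Function.update x (c m i0 j1) a1) := by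
            refine ⟨by rwa [update_zero_apply_zero], fun i => ?_⟩
            by_cases hi : i = i0
            · subst hi; rwa [bt_update_same]
            · rw [bt_update_other x i0 j1 a1 hi]; exact hgood i hi
          have hP2 : P m (Function.update x (c m i0 j2) a2) := by
            refine ⟨by rwa [update_zero_apply_zero], fun i => ?_⟩
            by_cases hi : i = i0
            · subst hi; rwa [bt_update_same]
            · rw [bt_update_other x i0 j2 a2 hi]; exact hgood i hi
          refine ⟨_, _, update_mem_ball x _ a1 ha1, update_mem_ball x _ a2 ha2,
            hP1, hP2, ?_, ?_⟩
          · unfold par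
            rw [sum_update x i0 j1 a1, sum_update x i0 j2 a2,
              update_zero_apply_zero, update_zero_apply_zero]
            omega
          · intro y hy hPy
            rw [mem_ball] at hy
            rcases hy with rfl | ⟨k, a, ha, rfl⟩
            · exact absurd (hPy.2 i0) hbad
            · by_cases hk : k = 0
              · subst hk
                exfalso
                have := hPy.2 i0
                rw [bt_update_zero] at this
                exact hbad this
              · obtain ⟨i, j, rfl⟩ := exists_block k hk
                by_cases hi : i = i0
                · subst hi
                  have := hPy.2 i
                  rw [bt_update_same] at this
                  rcases hu j a ha this with ⟨rfl, rfl⟩ | ⟨rfl, rfl⟩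
                  · exact Or.inl rfl
                  · exact Or.inr rfl
                · exfalso
                  have := hPy.2 i0
                  rw [bt_update_other x i j a (fun h => hi h.symm)] at this
                  exact hbad this
        · -- x 0 = 2 and a bad block: empty
          right
          intro y hy hPy
          rw [mem_ball] at hy
          rcases hy with rfl | ⟨k, a, ha, rfl⟩
          · exact hx0 hPy.1
          · by_cases hk : k = 0
            · subst hk
              have := hPy.2 i0
              rw [bt_update_zero] at this
              exact hbad this
            · obtain ⟨i, j, rfl⟩ := exists_block k hk
              have := hPy.1
              rw [update_zero_apply_zero] at this
              exact hx0 this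
    · -- at least two bad blocks: empty
      right
      push_neg at huniq
      obtain ⟨i1, hbad1, hne1⟩ := huniq
      intro y hy hPy
      rw [mem_ball] at hy
      rcases hy with rfl | ⟨k, a, ha, rfl⟩
      · exact hbad (hPy.2 i0)
      · by_cases hk : k = 0
        · subst hk
          have := hPy.2 i0
          rw [bt_update_zero] at this
          exact hbad this
        · obtain ⟨i, j, rfl⟩ := exists_block k hk
          by_cases hi : i = i0
          · subst hi
            have := hPy.2 i1
            rw [bt_update_other x i j a hne1] at this
            exact hbad1 this
          · have := hPy.2 i0
            rw [bt_update_other x i j a (fun h => hi h.symm)] at this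
            exact hbad this


/-! ### Counting -/

def Einv (m : ℕ) (p : Fin 3 × (Fin m → Fin 3 → Fin 3)) : Fin (3 * m + 1) → Fin 3 :=
  fun k => if h : k.val = 0 then p.1
    else p.2 ⟨(k.val - 1) / 3, by have := k.isLt; omega⟩ ⟨(k.val - 1) % 3, by omega⟩

lemma Einv_zero {m : ℕ} (p : Fin 3 × (Fin m → Fin 3 → Fin 3)) : Einv m p 0 = p.1 := by
  unfold Einv
  rw [dif_pos (by simp)]

lemma Einv_c {m : ℕ} (p : Fin 3 × (Fin m → Fin 3 → Fin 3)) (i : Fin m) (j : Fin 3) :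
    Einv m p (c m i j) = p.2 i j := by
  unfold Einv
  rw [dif_neg (by simp [c])]
  have hi : (⟨((c m i j).val - 1) / 3, by have := i.isLt; have := j.isLt; simp only [c]; omega⟩ : Fin m) = i := by
    apply Fin.ext
    simp only [c]
    have := j.isLt
    omega
  have hj : (⟨((c m i j).val - 1) % 3, by omega⟩ : Fin 3) = j := by
    apply Fin.ext
    simp only [c]
    have := j.isLt
    omega
  rw [hi, hj]

def E (m : ℕ) : (Fin (3 * m + 1) → Fin 3) ≃ (Fin 3 × (Fin m → Fin 3 → Fin 3)) where
  toFun x := (x 0, fun i => bt m x i)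
  invFun := Einv m
  left_inv x := by
    funext k
    by_cases h : k = 0
    · subst h
      exact Einv_zero (x 0, fun i => bt m x i)
    · obtain ⟨i, j, rfl⟩ := exists_block k h
      exact Einv_c (x 0, fun i => bt m x i) i j
  right_inv p := by
    refine Prod.ext ?_ ?_
    · exact Einv_zero p
    · funext i j
      exact Einv_c p i j

def E2 (m : ℕ) : {x : Fin (3 * m + 1) → Fin 3 // P m x} ≃
    ({a : Fin 3 // a.val < 2} × ∀ _ : Fin m, {t : Fin 3 → Fin 3 // Dis t}) :=
  Equiv.trans
    (Equiv.subtypeEquiv (p := P m)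
      (q := fun p : Fin 3 × (Fin m → Fin 3 → Fin 3) => p.1.val < 2 ∧ ∀ i, Dis (p.2 i))
      (E m) (fun x => Iff.rfl))
    (Equiv.trans
      (Equiv.subtypeProdEquivProd (p := fun a : Fin 3 => a.val < 2)
        (q := fun f : Fin m → Fin 3 → Fin 3 => ∀ i, Dis (f i)))
      ((Equiv.refl _).prodCongr (Equiv.subtypePiEquivPi (p := fun (_ : Fin m) t => Dis t))))

lemma card_P (m : ℕ) : ({x | P m x} : Set (Fin (3 * m + 1) → Fin 3)).ncard = 2 * 6 ^ m := by
  rw [← Nat.card_coe_set_eq]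
  have : Nat.card {x : Fin (3 * m + 1) → Fin 3 // P m x} = 2 * 6 ^ m := by
    rw [Nat.card_congr (E2 m), Nat.card_eq_fintype_card, Fintype.card_prod, Fintype.card_pi]
    have h2 : Fintype.card {a : Fin 3 // a.val < 2} = 2 := by decide
    have h6 : Fintype.card {t : Fin 3 → Fin 3 // Dis t} = 6 := by decide
    rw [h2]
    simp [h6]
  exact this

/-! ### Witnesses -/

def w (m : ℕ) : Fin (3 * m + 1) → Fin 3 :=
  fun k => if h : k.val = 0 then 0 else ⟨(k.val - 1) % 3, by omega⟩

lemma w_zero : w m 0 = 0 := by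
  unfold w
  rw [dif_pos (by simp)]

lemma bt_w (i : Fin m) : bt m (w m) i = fun j => j := by
  funext j
  show w m (c m i j) = j
  unfold w
  rw [dif_neg (by simp [c])]
  apply Fin.ext
  simp only [c]
  have := j.isLt
  omega

lemma dis_id : Dis (fun j : Fin 3 => j) := by decide

lemma sg_id : sg (fun j : Fin 3 => j) = 0 := by decide

lemma w_mem : w m ∈ T m 0 := by
  refine ⟨⟨by rw [w_zero]; decide, fun i => by rw [bt_w]; exact dis_id⟩, ?_⟩
  unfold par
  rw [w_zero]
  simp [bt_w, sg_id]

lemma w1_mem : Function.update (w m) 0 1 ∈ T m 1 := by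
  refine ⟨⟨by rw [Function.update_self]; decide,
    fun i => by rw [bt_update_zero, bt_w]; exact dis_id⟩, ?_⟩
  unfold par
  rw [Function.update_self]
  simp [bt_update_zero, bt_w, sg_id]

lemma exu (m : ℕ) (x ya yb : Fin (3 * m + 1) → Fin 3) (s : ℕ)
    (hya : ya ∈ (hammingGraph (3 * m + 1) 3).neighborSet x ∪ {x})
    (hPa : P m ya) (hpa : par m ya = s) (hpb : par m yb ≠ s)
    (hun : ∀ y ∈ (hammingGraph (3 * m + 1) 3).neighborSet x ∪ {x}, P m y → y = ya ∨ y = yb) :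
    ∃! y, (y ∈ (hammingGraph (3 * m + 1) 3).neighborSet x ∪ {x}) ∧ y ∈ T m s := by
  refine ⟨ya, ⟨hya, hPa, hpa⟩, ?_⟩
  rintro y ⟨hy, hyP, hys⟩
  rcases hun y hy hyP with rfl | rfl
  · rfl
  · exact absurd hys hpb

lemma T_disjoint (m : ℕ) : Disjoint (T m 0) (T m 1) := by
  rw [Set.disjoint_left]
  rintro x ⟨_, h0⟩ ⟨_, h1⟩
  rw [h0] at h1
  exact absurd h1 (by norm_num)

end BT13

/-- For every `m ≥ 1` there is a 1-perfect bitrade in `H(3m+1,3)` of size `2^{m+1} · 3^m`. -/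
theorem stmt13 (m : ℕ) (hm : 1 ≤ m) :
    ∃ T0 T1 : Set (Fin (3 * m + 1) → Fin 3),
      IsPerfectBitrade (hammingGraph (3 * m + 1) 3) T0 T1 ∧
      T0.ncard + T1.ncard = 2 ^ (m + 1) * 3 ^ m := by
  classical
  refine ⟨BT13.T m 0, BT13.T m 1,
    ⟨⟨BT13.w m, BT13.w_mem⟩, ⟨_, BT13.w1_mem⟩, BT13.T_disjoint m, ?_⟩, ?_⟩
  · intro x
    rcases BT13.classify m x with ⟨ya, yb, hya, hyb, hPa, hPb, hpar, hun⟩ | hemp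
    · left
      have hA : BT13.par m ya = 0 ∨ BT13.par m ya = 1 := by unfold BT13.par; omega
      have hB : BT13.par m yb = 0 ∨ BT13.par m yb = 1 := by unfold BT13.par; omega
      rcases hA with h | h
      · have hb1 : BT13.par m yb = 1 := by
          rcases hB with h' | h'
          · exact absurd (h.trans h'.symm) hpar
          · exact h'
        exact ⟨BT13.exu m x ya yb 0 hya hPa h (by rw [hb1]; norm_num) hun,
          BT13.exu m x yb ya 1 hyb hPb hb1 (by rw [h]; norm_num)
            (fun y hy hP => (hun y hy hP).symm)⟩
      · have hb0 : BT13.par m yb = 0 := by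
          rcases hB with h' | h'
          · exact h'
          · exact absurd (h.trans h'.symm) hpar
        exact ⟨BT13.exu m x yb ya 0 hyb hPb hb0 (by rw [h]; norm_num)
            (fun y hy hP => (hun y hy hP).symm),
          BT13.exu m x ya yb 1 hya hPa h (by rw [hb0]; norm_num) hun⟩
    · right
      intro y hy hmem
      rcases hmem with h | h
      · exact hemp y hy h.1
      · exact hemp y hy h.1
  · rw [← Set.ncard_union_eq (BT13.T_disjoint m) (Set.toFinite _) (Set.toFinite _)]
    have hU : BT13.T m 0 ∪ BT13.T m 1 = {x | BT13.P m x} := by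
      ext x
      simp only [Set.mem_union, BT13.T, Set.mem_setOf_eq]
      constructor
      · rintro (⟨h, _⟩ | ⟨h, _⟩) <;> exact h
      · intro h
        have hp : BT13.par m x = 0 ∨ BT13.par m x = 1 := by unfold BT13.par; omega
        rcases hp with hp | hp
        exacts [Or.inl ⟨h, hp⟩, Or.inr ⟨h, hp⟩]
    rw [hU, BT13.card_P]
    rw [show (6 : ℕ) = 2 * 3 from rfl, mul_pow, pow_succ]
    ring
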